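/- Every complex root z of the polynomial Q₂(T) satisfies |z| = 3. -/

import Mathlib

open Polynomial

/-- The Weil polynomial `Q₂(T) = Q₁(J(X)/𝔽₉, T)` of the intermediate Jacobian of the
cubic threefold `X` of the paper over `𝔽₉`. -/
noncomputable def weilQ2 : Polynomial ℤ :=
  X ^ 10 - 6 * X ^ 9 + 23 * X ^ 8 - 76 * X ^ 7 + 221 * X ^ 6 - 535 * X ^ 5
    + 1989 * X ^ 4 - 6156 * X ^ 3 + 16767 * X ^ 2 - 39366 * X + 59049

/-- The real quintic `g(s)` with `z^5 · g(z + 9/z) = Q₂(z)`. -/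
def gR (x : ℝ) : ℝ := x ^ 5 - 6 * x ^ 4 - 22 * x ^ 3 + 140 * x ^ 2 + 5 * x - 139

/-- The same quintic, as a complex polynomial. -/
noncomputable def gC : Polynomial ℂ :=
  X ^ 5 - 6 * X ^ 4 - 22 * X ^ 3 + 140 * X ^ 2 + 5 * X - 139

lemma gR_continuous : Continuous gR := by
  unfold gR; fun_prop

lemma gR_root_up {a b : ℝ} (hab : a ≤ b) (h1 : gR a ≤ 0) (h2 : 0 ≤ gR b) :
    ∃ r ∈ Set.Icc a b, gR r = 0 := by
  have := intermediate_value_Icc hab gR_continuous.continuousOn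
  have h0 : (0 : ℝ) ∈ Set.Icc (gR a) (gR b) := ⟨h1, h2⟩
  obtain ⟨r, hr, hr0⟩ := this h0
  exact ⟨r, hr, hr0⟩

lemma gR_root_down {a b : ℝ} (hab : a ≤ b) (h1 : 0 ≤ gR a) (h2 : gR b ≤ 0) :
    ∃ r ∈ Set.Icc a b, gR r = 0 := by
  have := intermediate_value_Icc' hab gR_continuous.continuousOn
  have h0 : (0 : ℝ) ∈ Set.Icc (gR b) (gR a) := ⟨h2, h1⟩
  obtain ⟨r, hr, hr0⟩ := this h0
  exact ⟨r, hr, hr0⟩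

lemma gC_natDegree : gC.natDegree = 5 := by
  unfold gC; compute_degree!

lemma gC_ne_zero : gC ≠ 0 := by
  intro h
  have := gC_natDegree
  rw [h] at this
  simp at this

lemma mem_roots_of_gR {r : ℝ} (h : gR r = 0) : (r : ℂ) ∈ gC.roots := by
  rw [Polynomial.mem_roots gC_ne_zero]
  have hc : ((gR r : ℝ) : ℂ) = 0 := by rw [h]; norm_num
  unfold gR at hc
  push_cast at hc
  unfold Polynomial.IsRoot gC
  simp only [eval_sub, eval_add, eval_mul, eval_pow, eval_X, eval_ofNat]
  linear_combination hc

lemma abs_of_real_trace (z : ℂ) (hz : z ≠ 0) (r : ℝ) (hr1 : -6 < r) (hr2 : r < 6)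
    (h : z + 9 / z = (r : ℂ)) : ‖z‖ = 3 := by
  have hq : z ^ 2 - (r : ℂ) * z + 9 = 0 := by
    have h' : z * (z + 9 / z) = z * (r : ℂ) := by rw [h]
    field_simp at h'
    linear_combination h'
  have hq' : (starRingEnd ℂ z) ^ 2 - (r : ℂ) * (starRingEnd ℂ z) + 9 = 0 := by
    have := congrArg (starRingEnd ℂ) hq
    simpa [map_pow, map_ofNat, Complex.conj_ofReal] using this
  by_cases hzz : z = starRingEnd ℂ z
  · -- z is real: contradiction
    obtain ⟨x, hx⟩ := Complex.conj_eq_iff_real.mp hzz.symm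
    rw [hx] at hq
    have hxr : x ^ 2 - r * x + 9 = 0 := by
      have : ((x ^ 2 - r * x + 9 : ℝ) : ℂ) = 0 := by push_cast; linear_combination hq
      exact_mod_cast this
    nlinarith [sq_nonneg (2 * x - r)]
  · -- z not real: z * conj z = 9
    have hdiff : (z - starRingEnd ℂ z) * (z + starRingEnd ℂ z - (r : ℂ)) = 0 := by
      linear_combination hq - hq'
    have hsum : z + starRingEnd ℂ z = (r : ℂ) := by
      rcases mul_eq_zero.mp hdiff with h1 | h1
      · exact absurd (sub_eq_zero.mp h1) hzz
      · linear_combination h1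
    have hmul : z * starRingEnd ℂ z = 9 := by
      have : z ^ 2 - (z + starRingEnd ℂ z) * z + 9 = 0 := by rw [hsum]; exact hq
      linear_combination -this
    have hns : (Complex.normSq z : ℂ) = 9 := by rw [← Complex.mul_conj]; exact hmul
    have hns' : Complex.normSq z = 9 := by exact_mod_cast hns
    have habs : ‖z‖ ^ 2 = 9 := by rw [Complex.sq_norm]; exact hns'
    nlinarith [norm_nonneg z]

/-- Every complex root `z` of `Q₂(T)` satisfies `|z| = 3`. -/
theorem weilQ2_roots_abs :
    ∀ z : ℂ, Polynomial.aeval z weilQ2 = 0 → ‖z‖ = 3 := by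
  intro z h
  have h' : z ^ 10 - 6 * z ^ 9 + 23 * z ^ 8 - 76 * z ^ 7 + 221 * z ^ 6 - 535 * z ^ 5
      + 1989 * z ^ 4 - 6156 * z ^ 3 + 16767 * z ^ 2 - 39366 * z + 59049 = 0 := by
    have := h
    simp only [weilQ2, map_add, map_sub, map_mul, map_pow, aeval_X, map_ofNat] at this
    convert this using 2
  have hz : z ≠ 0 := by
    rintro rfl
    norm_num at h'
  set s : ℂ := z + 9 / z with hs
  have e : z * s = z ^ 2 + 9 := by
    rw [hs]; field_simp
  have key : z ^ 5 * (s ^ 5 - 6 * s ^ 4 - 22 * s ^ 3 + 140 * s ^ 2 + 5 * s - 139)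
      = z ^ 10 - 6 * z ^ 9 + 23 * z ^ 8 - 76 * z ^ 7 + 221 * z ^ 6 - 535 * z ^ 5
      + 1989 * z ^ 4 - 6156 * z ^ 3 + 16767 * z ^ 2 - 39366 * z + 59049 := by
    calc z ^ 5 * (s ^ 5 - 6 * s ^ 4 - 22 * s ^ 3 + 140 * s ^ 2 + 5 * s - 139)
        = (z*s) ^ 5 - 6 * z * (z*s) ^ 4 - 22 * z ^ 2 * (z*s) ^ 3 + 140 * z ^ 3 * (z*s) ^ 2
          + 5 * z ^ 4 * (z*s) - 139 * z ^ 5 := by ring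
      _ = (z ^ 2 + 9) ^ 5 - 6 * z * (z ^ 2 + 9) ^ 4 - 22 * z ^ 2 * (z ^ 2 + 9) ^ 3
          + 140 * z ^ 3 * (z ^ 2 + 9) ^ 2 + 5 * z ^ 4 * (z ^ 2 + 9) - 139 * z ^ 5 := by rw [e]
      _ = _ := by ring
  rw [h'] at key
  have hg : s ^ 5 - 6 * s ^ 4 - 22 * s ^ 3 + 140 * s ^ 2 + 5 * s - 139 = 0 := by
    rcases mul_eq_zero.mp key with h1 | h1
    · exact absurd h1 (pow_ne_zero 5 hz)
    · exact h1
  have hsroot : s ∈ gC.roots := by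
    rw [Polynomial.mem_roots gC_ne_zero]
    unfold Polynomial.IsRoot gC
    simp only [eval_sub, eval_add, eval_mul, eval_pow, eval_X, eval_ofNat]
    linear_combination hg
  -- five real roots of gR
  obtain ⟨r1, hr1m, hr1⟩ := gR_root_up (by norm_num : (-5:ℝ) ≤ -4)
    (by norm_num [gR]) (by norm_num [gR])
  obtain ⟨r2, hr2m, hr2⟩ := gR_root_down (by norm_num : (-1:ℝ) ≤ 0)
    (by norm_num [gR]) (by norm_num [gR])
  obtain ⟨r3, hr3m, hr3⟩ := gR_root_up (by norm_num : (1:ℝ) ≤ 2)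
    (by norm_num [gR]) (by norm_num [gR])
  obtain ⟨r4, hr4m, hr4⟩ := gR_root_down (by norm_num : (51/10:ℝ) ≤ 26/5)
    (by norm_num [gR]) (by norm_num [gR])
  obtain ⟨r5, hr5m, hr5⟩ := gR_root_up (by norm_num : (26/5:ℝ) ≤ 11/2)
    (by norm_num [gR]) (by norm_num [gR])
  obtain ⟨h1a, h1b⟩ := hr1m
  obtain ⟨h2a, h2b⟩ := hr2m
  obtain ⟨h3a, h3b⟩ := hr3m
  obtain ⟨h4a, h4b⟩ := hr4m
  obtain ⟨h5a, h5b⟩ := hr5m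
  have hr45 : r4 < r5 := by
    rcases lt_or_eq_of_le h4b with h | h
    · linarith
    · exfalso
      rw [h] at hr4
      norm_num [gR] at hr4
  -- distinctness
  have d12 : r1 < r2 := by linarith
  have d23 : r2 < r3 := by linarith
  have d34 : r3 < r4 := by linarith
  -- the finset of roots
  set F : Finset ℂ := {(r1:ℂ), (r2:ℂ), (r3:ℂ), (r4:ℂ), (r5:ℂ)} with hF
  have hne : ∀ (a b : ℝ), a < b → (a:ℂ) ≠ (b:ℂ) := by
    intro a b hab hab'
    exact absurd (Complex.ofReal_inj.mp hab') (ne_of_lt hab)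
  have hcard : F.card = 5 := by
    rw [hF]
    rw [Finset.card_insert_of_notMem, Finset.card_insert_of_notMem,
      Finset.card_insert_of_notMem, Finset.card_insert_of_notMem, Finset.card_singleton]
    · simp only [Finset.mem_singleton]
      exact hne r4 r5 hr45
    · simp only [Finset.mem_insert, Finset.mem_singleton]
      push_neg
      exact ⟨hne r3 r4 d34, hne r3 r5 (by linarith)⟩
    · simp only [Finset.mem_insert, Finset.mem_singleton]
      push_neg
      exact ⟨hne r2 r3 d23, hne r2 r4 (by linarith), hne r2 r5 (by linarith)⟩
    · simp only [Finset.mem_insert, Finset.mem_singleton]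
      push_neg
      exact ⟨hne r1 r2 d12, hne r1 r3 (by linarith), hne r1 r4 (by linarith),
        hne r1 r5 (by linarith)⟩
  have hsub : F ⊆ gC.roots.toFinset := by
    intro x hx
    rw [Multiset.mem_toFinset]
    rw [hF] at hx
    simp only [Finset.mem_insert, Finset.mem_singleton] at hx
    rcases hx with rfl | rfl | rfl | rfl | rfl
    · exact mem_roots_of_gR hr1
    · exact mem_roots_of_gR hr2
    · exact mem_roots_of_gR hr3
    · exact mem_roots_of_gR hr4
    · exact mem_roots_of_gR hr5
  have hcardle : gC.roots.toFinset.card ≤ 5 := by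
    calc gC.roots.toFinset.card ≤ Multiset.card gC.roots := gC.roots.toFinset_card_le
    _ ≤ gC.natDegree := Polynomial.card_roots' gC
    _ = 5 := gC_natDegree
  have hFeq : F = gC.roots.toFinset :=
    Finset.eq_of_subset_of_card_le hsub (by rw [hcard]; exact hcardle)
  have hsF : s ∈ F := by
    rw [hFeq, Multiset.mem_toFinset]
    exact hsroot
  rw [hF] at hsF
  simp only [Finset.mem_insert, Finset.mem_singleton] at hsF
  rcases hsF with he | he | he | he | he
  · exact abs_of_real_trace z hz r1 (by linarith) (by linarith) (hs.symm.trans he)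
  · exact abs_of_real_trace z hz r2 (by linarith) (by linarith) (hs.symm.trans he)
  · exact abs_of_real_trace z hz r3 (by linarith) (by linarith) (hs.symm.trans he)
  · exact abs_of_real_trace z hz r4 (by linarith) (by linarith) (hs.symm.trans he)
  · exact abs_of_real_trace z hz r5 (by linarith) (by linarith) (hs.symm.trans he)
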